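/- For λ₀ ∈ ℂ, 0 < a < b and π/4 < φ < π/2, define the polynomial F(λ) = ((λ−λ₀)⁴ − 2a²(λ−λ₀)²cos 2φ + a⁴)((λ−λ₀)⁴ − 2b²(λ−λ₀)²cos 2φ + b⁴). Then the map (χ, λ) ↦ (a²b²(λ−λ₀)⁻⁴ χ, λ₀ + ab(λ−λ₀)⁻¹) maps solutions of χ² = F(λ) with λ ≠ λ₀ to solutions of the same equation; i.e., setting λ' = λ₀ + ab/(λ−λ₀) and χ' = a²b²χ/(λ−λ₀)⁴, one has (χ')² = F(λ'). Moreover this map is an involution on the set {(χ,λ) : χ² = F(λ), λ ≠ λ₀}. -/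

import Mathlib

open Complex

/-- The degree-8 polynomial defining the genus-3 spectral curve Γ₃. -/
noncomputable def curvePoly (lam0 : ℂ) (a b φ : ℝ) (l : ℂ) : ℂ :=
  ((l - lam0) ^ 4 - 2 * (a : ℂ) ^ 2 * (l - lam0) ^ 2 * Real.cos (2 * φ) + (a : ℂ) ^ 4) *
  ((l - lam0) ^ 4 - 2 * (b : ℂ) ^ 2 * (l - lam0) ^ 2 * Real.cos (2 * φ) + (b : ℂ) ^ 4)

theorem tau3_involution
    (lam0 : ℂ) (a b φ : ℝ) (ha : 0 < a) (hab : a < b)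
    (hφ₁ : Real.pi / 4 < φ) (hφ₂ : φ < Real.pi / 2) :
    ∀ χ l : ℂ, χ ^ 2 = curvePoly lam0 a b φ l → l ≠ lam0 →
      let l' := lam0 + (a : ℂ) * b / (l - lam0)
      let χ' := (a : ℂ) ^ 2 * (b : ℂ) ^ 2 * χ / (l - lam0) ^ 4
      χ' ^ 2 = curvePoly lam0 a b φ l' ∧
      l' ≠ lam0 ∧
      lam0 + (a : ℂ) * b / (l' - lam0) = l ∧
      (a : ℂ) ^ 2 * (b : ℂ) ^ 2 * χ' / (l' - lam0) ^ 4 = χ := by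
  intro χ l h hl l' χ'
  have hd : l - lam0 ≠ 0 := sub_ne_zero.mpr hl
  have ha' : (a : ℂ) ≠ 0 := Complex.ofReal_ne_zero.mpr ha.ne'
  have hb' : (b : ℂ) ≠ 0 := Complex.ofReal_ne_zero.mpr (ha.trans hab).ne'
  have hl' : l' - lam0 = (a : ℂ) * b / (l - lam0) := by simp [l']
  have hab' : (a : ℂ) * b / (l - lam0) ≠ 0 := div_ne_zero (mul_ne_zero ha' hb') hd
  refine ⟨?_, ?_, ?_, ?_⟩
  · show ((a : ℂ) ^ 2 * b ^ 2 * χ / (l - lam0) ^ 4) ^ 2 = _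
    unfold curvePoly at h ⊢
    rw [hl']
    set c : ℂ := (Real.cos (2 * φ) : ℂ) with hc
    set d : ℂ := l - lam0 with hdd
    have e1 : ((a : ℂ) * b / d) ^ 4 - 2 * (a : ℂ) ^ 2 * ((a : ℂ) * b / d) ^ 2 * c + (a : ℂ) ^ 4
        = ((a : ℂ) ^ 4 / d ^ 4) * (d ^ 4 - 2 * (b : ℂ) ^ 2 * d ^ 2 * c + (b : ℂ) ^ 4) := by
      field_simp; ring
    have e2 : ((a : ℂ) * b / d) ^ 4 - 2 * (b : ℂ) ^ 2 * ((a : ℂ) * b / d) ^ 2 * c + (b : ℂ) ^ 4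
        = ((b : ℂ) ^ 4 / d ^ 4) * (d ^ 4 - 2 * (a : ℂ) ^ 2 * d ^ 2 * c + (a : ℂ) ^ 4) := by
      field_simp; ring
    rw [e1, e2]
    rw [div_pow, mul_pow, mul_pow, h]
    field_simp
  · simp only [l']
    intro hcon
    exact hab' (by linear_combination hcon - lam0)
  · rw [hl']
    field_simp
    ring
  · rw [hl']
    show (a : ℂ) ^ 2 * b ^ 2 * ((a : ℂ) ^ 2 * b ^ 2 * χ / (l - lam0) ^ 4) / _ = χ
    field_simp
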